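/- Let α > 0 and β > 0, and let c_{k,n} ∈ (0,1) satisfy lim_{n→∞} c_{k,n}/(k^α/n^β) = 1 for every fixed integer k ≥ 1. Then for every fixed k ≥ 1 and every real t > 0, lim_{n→∞} ∑_{j=1}^{⌊t n^β⌋} ((1-c_{k,n})^k)^{j-1} k (1-c_{k,n})^{k-1} c_{k,n} = 1 - e^{-k^{α+1} t}. -/

import Mathlib

open Filter Topology

/-- Let `α, β > 0` and let `c_{k,n} ∈ (0,1)` satisfy
`c_{k,n} / (k^α/n^β) → 1` as `n → ∞` for every fixed `k ≥ 1`.  Then for every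
fixed `k ≥ 1` and every `t > 0`,
`∑_{j=1}^{⌊t n^β⌋} ((1-c_{k,n})^k)^{j-1} k (1-c_{k,n})^{k-1} c_{k,n}
  → 1 - e^{-k^{α+1} t}`. -/
theorem stmt_15 (α β : ℝ) (hα : 0 < α) (hβ : 0 < β)
    (c : ℕ → ℕ → ℝ) (hc : ∀ k n : ℕ, c k n ∈ Set.Ioo (0 : ℝ) 1)
    (hlim : ∀ k : ℕ, 1 ≤ k →
      Tendsto (fun n : ℕ => c k n / ((k : ℝ) ^ α / (n : ℝ) ^ β)) atTop (nhds 1))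
    (k : ℕ) (hk : 1 ≤ k) (t : ℝ) (ht : 0 < t) :
    Tendsto
      (fun n : ℕ => ∑ j ∈ Finset.Icc 1 ⌊t * (n : ℝ) ^ β⌋₊,
        ((1 - c k n) ^ k) ^ (j - 1) * ((k : ℝ) * (1 - c k n) ^ (k - 1) * c k n))
      atTop (nhds (1 - Real.exp (-((k : ℝ) ^ (α + 1) * t)))) := by
  set a : ℕ → ℝ := fun n => c k n with ha_def
  have haIoo : ∀ n, a n ∈ Set.Ioo (0:ℝ) 1 := fun n => hc k n
  have hk0 : (0:ℝ) < (k:ℝ) := by exact_mod_cast hk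
  set M : ℕ → ℕ := fun n => ⌊t * (n:ℝ)^β⌋₊ with hM_def
  have hnβ : Tendsto (fun n : ℕ => (n:ℝ)^β) atTop atTop :=
    (tendsto_rpow_atTop hβ).comp tendsto_natCast_atTop_atTop
  have hkα : (0:ℝ) < (k:ℝ)^α := Real.rpow_pos_of_pos hk0 α
  -- a → 0
  have h0 : Tendsto a atTop (𝓝 0) := by
    have h1 : Tendsto (fun n : ℕ => (k:ℝ)^α / (n:ℝ)^β) atTop (𝓝 0) :=
      tendsto_const_nhds.div_atTop hnβ
    have h2 := (hlim k hk).mul h1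
    rw [one_mul] at h2
    refine h2.congr' ?_
    filter_upwards [eventually_gt_atTop 0] with n hn
    have hnb : (0:ℝ) < (n:ℝ)^β := Real.rpow_pos_of_pos (by exact_mod_cast hn) β
    have hne : (k:ℝ)^α / (n:ℝ)^β ≠ 0 := ne_of_gt (div_pos hkα hnb)
    field_simp
    rfl
  -- n^β * a n → k^α
  have hn' : Tendsto (fun n : ℕ => (n:ℝ)^β * a n) atTop (𝓝 ((k:ℝ)^α)) := by
    have h2 := (hlim k hk).mul_const ((k:ℝ)^α)
    rw [one_mul] at h2
    refine h2.congr' ?_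
    filter_upwards [eventually_gt_atTop 0] with n hn
    have hnb : (0:ℝ) < (n:ℝ)^β := Real.rpow_pos_of_pos (by exact_mod_cast hn) β
    field_simp
    ring
  -- M/n^β → t
  have hM : Tendsto (fun n : ℕ => (M n : ℝ) / (n:ℝ)^β) atTop (𝓝 t) := by
    have hlow : Tendsto (fun n : ℕ => t - 1 / (n:ℝ)^β) atTop (𝓝 t) := by
      have := tendsto_const_nhds.sub hnβ.inv_tendsto_atTop (f := fun _ : ℕ => t)
      simpa [one_div] using this
    refine tendsto_of_tendsto_of_tendsto_of_le_of_le' hlow tendsto_const_nhds ?_ ?_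
    · filter_upwards [eventually_gt_atTop 0] with n hn
      have hnb : (0:ℝ) < (n:ℝ)^β := Real.rpow_pos_of_pos (by exact_mod_cast hn) β
      have h1 : t * (n:ℝ)^β < (M n : ℝ) + 1 := Nat.lt_floor_add_one _
      rw [sub_le_iff_le_add, ← add_div, le_div_iff₀ hnb] at *
      nlinarith [h1]
    · filter_upwards [eventually_gt_atTop 0] with n hn
      have hnb : (0:ℝ) < (n:ℝ)^β := Real.rpow_pos_of_pos (by exact_mod_cast hn) β
      have h1 : (M n : ℝ) ≤ t * (n:ℝ)^β :=
        Nat.floor_le (by positivity)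
      rw [div_le_iff₀ hnb]
      linarith
  -- log(1-a)/a → -1
  have hlog1 : Tendsto (fun n : ℕ => Real.log (1 - a n) / a n) atTop (𝓝 (-1)) := by
    have h1 : HasDerivAt (fun x : ℝ => 1 - x) (-1) 0 := by
      simpa using (hasDerivAt_id (0:ℝ)).const_sub 1
    have hd : HasDerivAt (fun x : ℝ => Real.log (1 - x)) (-1) 0 := by
      have := h1.log (by norm_num)
      simpa using this
    rw [hasDerivAt_iff_tendsto_slope] at hd
    have h0' : Tendsto a atTop (𝓝[≠] 0) :=
      tendsto_nhdsWithin_of_tendsto_nhds_of_eventually_within _ h0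
        (Eventually.of_forall fun n => (haIoo n).1.ne')
    have := hd.comp h0'
    refine this.congr fun n => ?_
    simp [slope_def_field, Function.comp]
  -- ((1-a)^k)^M → exp(-(k^(α+1) t))
  have hexp : Tendsto (fun n : ℕ => ((1 - a n)^k)^(M n)) atTop
      (𝓝 (Real.exp (-((k:ℝ)^(α+1) * t)))) := by
    have hL : Tendsto (fun n : ℕ => Real.log (1 - a n) * ((k:ℝ) * (M n : ℕ)))
        atTop (𝓝 (-((k:ℝ)^(α+1) * t))) := by
      have h2 := ((hlog1.mul hn').mul hM).mul_const (k:ℝ)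
      have hval : -1 * (k:ℝ)^α * t * (k:ℝ) = -((k:ℝ)^(α+1) * t) := by
        rw [Real.rpow_add_one (ne_of_gt hk0)]
        ring
      rw [hval] at h2
      refine h2.congr' ?_
      filter_upwards [eventually_gt_atTop 0] with n hn
      have hnb : (0:ℝ) < (n:ℝ)^β := Real.rpow_pos_of_pos (by exact_mod_cast hn) β
      have hane : a n ≠ 0 := (haIoo n).1.ne'
      field_simp
    have := (Real.continuous_exp.tendsto _).comp hL
    refine this.congr fun n => ?_
    have h1a : (0:ℝ) < 1 - a n := by have := (haIoo n).2; linarith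
    rw [← pow_mul, ← Real.rpow_natCast (1 - a n) (k * M n),
      Real.rpow_def_of_pos h1a]
    simp only [Function.comp_apply]
    push_cast
    ring_nf
  -- k(1-a)^(k-1)/∑ → 1
  have hc1 : Tendsto (fun n : ℕ => 1 - a n) atTop (𝓝 1) := by
    simpa using tendsto_const_nhds.sub h0
  have hs : Tendsto (fun n : ℕ =>
      ((k:ℝ) * (1 - a n)^(k-1)) / (∑ i ∈ Finset.range k, (1 - a n)^i))
      atTop (𝓝 1) := by
    have hnum : Tendsto (fun n : ℕ => (k:ℝ) * (1 - a n)^(k-1)) atTop (𝓝 ((k:ℝ))) := by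
      have := (tendsto_const_nhds (x := (k:ℝ))).mul (hc1.pow (k-1))
      simpa using this
    have hden : Tendsto (fun n : ℕ => ∑ i ∈ Finset.range k, (1 - a n)^i) atTop
        (𝓝 ((k:ℝ))) := by
      have := tendsto_finset_sum (Finset.range k) (fun i _ => hc1.pow i)
      simpa using this
    have := hnum.div hden (ne_of_gt hk0)
    rw [div_self (ne_of_gt hk0)] at this
    exact this
  -- rewrite the sum
  have hrewrite : ∀ n : ℕ,
      (∑ j ∈ Finset.Icc 1 (M n),
        ((1 - a n) ^ k) ^ (j - 1) * ((k : ℝ) * (1 - a n) ^ (k - 1) * a n))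
      = ((k:ℝ) * (1 - a n)^(k-1)) / (∑ i ∈ Finset.range k, (1 - a n)^i)
        * (1 - ((1 - a n)^k)^(M n)) := by
    intro n
    obtain ⟨hx0, hx1⟩ := haIoo n
    set x := a n
    have h1a : (0:ℝ) < 1 - x := by linarith
    have h1a1 : 1 - x < 1 := by linarith
    have hr1 : (1 - x)^k < 1 := pow_lt_one₀ (le_of_lt h1a) h1a1 (by omega)
    have hrne : (1 - x)^k ≠ 1 := ne_of_lt hr1
    have hS : (0:ℝ) < ∑ i ∈ Finset.range k, (1 - x)^i :=
      Finset.sum_pos (fun i _ => pow_pos h1a i)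
        (Finset.nonempty_range_iff.mpr (by omega))
    have hSx : 1 - (1 - x)^k = x * ∑ i ∈ Finset.range k, (1 - x)^i := by
      have := geom_sum_mul (1 - x) k
      nlinarith [this]
    have hIcc : (∑ j ∈ Finset.Icc 1 (M n),
        ((1 - x) ^ k) ^ (j - 1) * ((k : ℝ) * (1 - x) ^ (k - 1) * x))
        = (∑ i ∈ Finset.range (M n), ((1 - x) ^ k) ^ i)
          * ((k : ℝ) * (1 - x) ^ (k - 1) * x) := by
      rw [Finset.sum_mul, show Finset.Icc 1 (M n) = Finset.Ico 1 (M n + 1) from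
        by rw [Finset.Ico_add_one_right_eq_Icc], Finset.sum_Ico_eq_sum_range]
      simp [Nat.add_sub_cancel_left]
    rw [hIcc, geom_sum_eq hrne]
    have hr1' : (1 - x)^k - 1 ≠ 0 := sub_ne_zero.mpr hrne
    rw [div_mul_eq_mul_div, div_mul_eq_mul_div, div_eq_div_iff hr1' hS.ne']
    linear_combination ((k:ℝ)*(1-x)^(k-1)*(1 - ((1-x)^k)^(M n))) * hSx
  have hfin := hs.mul ((tendsto_const_nhds (x := (1:ℝ))).sub hexp)
  rw [one_mul] at hfin
  exact hfin.congr fun n => (hrewrite n).symm
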